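/- arXiv:2008.06903 — 2 statements merged into one kernel-verified Lean document; each statement's English description precedes it below -/
import Mathlib

section
/- Let x⁰ ∈ Q and let (xⁿ)_{n≥0} ⊆ Q be such that xⁿ⁺¹ is a scheme update of xⁿ for every n ≥ 0, and assume the discrete energy E_N is bounded below on Q (there is B ∈ ℝ with E_N(x) ≥ B for all x ∈ Q). Then lim_{n→∞} ⟨c[xⁿ] ⊙ δⁿ, δⁿ⟩_E = 0, where δⁿ_i = (xⁿ⁺¹_i − xⁿ_i)/τ and (a ⊙ b)_i = a_i b_i. (Part of Theorem 4.4.) -/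
open Finset Filter

noncomputable section

/-- Forward difference onto cells: `(D_h l)_{i-1/2} = (l_i - l_{i-1})/h` (use index `i`, `1 ≤ i ≤ M`). -/
def DhOp (h : ℝ) (l : ℕ → ℝ) (i : ℕ) : ℝ := (l i - l (i - 1)) / h

/-- Difference of a cell function back onto nodes: `(d_h φ)_i = (φ_{i+1/2} - φ_{i-1/2})/h`;
a cell function `φ` is encoded by `φ i = φ_{i-1/2}`. -/
def dhOp (h : ℝ) (φ : ℕ → ℝ) (i : ℕ) : ℝ := (φ (i + 1) - φ i) / h

/-- Central difference `D̃_h` on nodes. -/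
def DtOp (M : ℕ) (h : ℝ) (l : ℕ → ℝ) (i : ℕ) : ℝ :=
  if i = 0 then (l 1 - l 0) / h
  else if i = M then (l M - l (M - 1)) / h
  else (l (i + 1) - l (i - 1)) / (2 * h)

/-- Node inner product `⟨l, g⟩_E`. -/
def ipE (M : ℕ) (h : ℝ) (l g : ℕ → ℝ) : ℝ :=
  h * (l 0 * g 0 / 2 + (∑ i ∈ Finset.Ioo 0 M, l i * g i) + l M * g M / 2)

/-- Cell inner product `⟨φ, ψ⟩_C`. -/
def ipC (M : ℕ) (h : ℝ) (φ ψ : ℕ → ℝ) : ℝ :=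
  h * ∑ i ∈ Finset.Icc 1 M, φ i * ψ i

/-- The admissible (ordered) set `Q`. -/
def inQ (M : ℕ) (X0 XM : ℝ) (l : ℕ → ℝ) : Prop :=
  l 0 = X0 ∧ l M = XM ∧ ∀ i, 1 ≤ i → i ≤ M → l (i - 1) < l i

/-- The closure `Q̄` of the admissible set. -/
def inQbar (M : ℕ) (X0 XM : ℝ) (l : ℕ → ℝ) : Prop :=
  l 0 = X0 ∧ l M = XM ∧ ∀ i, 1 ≤ i → i ≤ M → l (i - 1) ≤ l i

/-- `Ŝ[x]_i = ⟨K(x_i - y), u₀(Y)⟩_E` for a kernel `K` (e.g. `K = W_c'`);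
also used as `w[x]_i` when `K = W` itself. -/
def Shat (M : ℕ) (h : ℝ) (K : ℝ → ℝ) (u0 x : ℕ → ℝ) (i : ℕ) : ℝ :=
  ipE M h (fun j => K (x i - x j)) u0

/-- The cell function `G[x]_{i-1/2} = s·H'(s) - H(s)`, `s = u_{0,i-1/2}/(D_h x)_{i-1/2}`. -/
def Gcell (h : ℝ) (H : ℝ → ℝ) (u0half x : ℕ → ℝ) (i : ℕ) : ℝ :=
  u0half i / DhOp h x i * deriv H (u0half i / DhOp h x i) - H (u0half i / DhOp h x i)

/-- The mobility coefficient `c[x]_i = u_{0,i}² / ((D̃_h x)_i · f(u_{0,i}/(D̃_h x)_i))`. -/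
def cCoef (M : ℕ) (h : ℝ) (f : ℝ → ℝ) (u0 x : ℕ → ℝ) (i : ℕ) : ℝ :=
  u0 i ^ 2 / (DtOp M h x i * f (u0 i / DtOp M h x i))

/-- `xp` is a scheme update of `x`: the fully discrete convex-splitting scheme equations. -/
def SchemeUpdate (M : ℕ) (h τ : ℝ) (H f Vc Ve Wc We : ℝ → ℝ)
    (u0 u0half x xp : ℕ → ℝ) : Prop :=
  ∀ i, 1 ≤ i → i ≤ M - 1 →
    cCoef M h f u0 x i * (xp i - x i) / τ =
      -dhOp h (Gcell h H u0half xp) i - u0 i * deriv Vc (xp i)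
        + u0 i * deriv Ve (x i)
        - u0 i * Shat M h (deriv Wc) u0 xp i + u0 i * Shat M h (deriv We) u0 x i

/-- The discrete total energy `E_N`. -/
def EN (M : ℕ) (h : ℝ) (H V W : ℝ → ℝ) (u0 u0half x : ℕ → ℝ) : ℝ :=
  h * ∑ i ∈ Finset.Icc 1 M, H (u0half i / DhOp h x i) * DhOp h x i
    + ipE M h u0 (fun i => V (x i))
    + 1 / 2 * ipE M h u0 (fun i => Shat M h W u0 x i)

/-- The convex part `E_{N,c}` of the discrete total energy. -/
def ENc (M : ℕ) (h : ℝ) (H Vc Wc : ℝ → ℝ) (u0 u0half x : ℕ → ℝ) : ℝ :=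
  h * ∑ i ∈ Finset.Icc 1 M, H (u0half i / DhOp h x i) * DhOp h x i
    + ipE M h u0 (fun i => Vc (x i))
    + 1 / 2 * ipE M h u0 (fun i => Shat M h Wc u0 x i)

/-- The concave (subtracted convex) part `E_{N,e}` of the discrete total energy. -/
def ENe (M : ℕ) (h : ℝ) (Ve We : ℝ → ℝ) (u0 x : ℕ → ℝ) : ℝ :=
  ipE M h u0 (fun i => Ve (x i)) + 1 / 2 * ipE M h u0 (fun i => Shat M h We u0 x i)

/-- The convex functional `J` whose minimizer over `Q` is the scheme update of `xn`. -/
def Jfun (M : ℕ) (h τ : ℝ) (H f Vc Ve Wc We : ℝ → ℝ)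
    (u0 u0half xn z : ℕ → ℝ) : ℝ :=
  1 / (2 * τ) * ipE M h (fun i => cCoef M h f u0 xn i * (z i - xn i)) (fun i => z i - xn i)
    + h * ∑ i ∈ Finset.Icc 1 M, H (u0half i / DhOp h z i) * DhOp h z i
    + ipE M h u0 (fun i => Vc (z i))
    + 1 / 2 * ipE M h u0 (fun i => Shat M h Wc u0 z i)
    - ipE M h (fun i => u0 i * deriv Ve (xn i)) z
    - ipE M h (fun i => u0 i * Shat M h (deriv We) u0 xn i) z

/-- Quadrature weights of the trapezoid inner product. -/
def wtN (M : ℕ) (h : ℝ) (i : ℕ) : ℝ := if i = 0 ∨ i = M then h / 2 else h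

lemma wtN_nonneg (M : ℕ) {h : ℝ} (hh : 0 ≤ h) (i : ℕ) : 0 ≤ wtN M h i := by
  unfold wtN; split <;> linarith

lemma ipE_wt (M : ℕ) (hM : 1 ≤ M) (h : ℝ) (l g : ℕ → ℝ) :
    ipE M h l g = ∑ i ∈ Finset.Icc 0 M, wtN M h i * (l i * g i) := by
  have hset : Finset.Icc 0 M = insert 0 (insert M (Finset.Ioo 0 M)) := by
    ext i; simp [Finset.mem_Icc, Finset.mem_Ioo, Finset.mem_insert]; omega
  have h1 : (0 : ℕ) ∉ insert M (Finset.Ioo 0 M) := by simp; omega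
  have h2 : M ∉ Finset.Ioo 0 M := by simp
  rw [hset, Finset.sum_insert h1, Finset.sum_insert h2]
  have h3 : ∀ i ∈ Finset.Ioo 0 M, wtN M h i * (l i * g i) = h * (l i * g i) := by
    intro i hi
    simp only [Finset.mem_Ioo] at hi
    rw [wtN, if_neg (by omega)]
  rw [Finset.sum_congr rfl h3]
  rw [ipE, ← Finset.mul_sum]
  simp [wtN]
  ring

lemma sum_Icc_of_ends_zero (M : ℕ) (hM : 1 ≤ M) (F : ℕ → ℝ) (h0 : F 0 = 0) (hMz : F M = 0) :
    ∑ i ∈ Finset.Icc 0 M, F i = ∑ i ∈ Finset.Ioo 0 M, F i := by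
  have hset : Finset.Icc 0 M = insert 0 (insert M (Finset.Ioo 0 M)) := by
    ext i; simp [Finset.mem_Icc, Finset.mem_Ioo, Finset.mem_insert]; omega
  have h1 : (0 : ℕ) ∉ insert M (Finset.Ioo 0 M) := by simp; omega
  have h2 : M ∉ Finset.Ioo 0 M := by simp
  rw [hset, Finset.sum_insert h1, Finset.sum_insert h2, h0, hMz]
  ring

lemma grad_ineq {S : Set ℝ} {F : ℝ → ℝ} (hf : ConvexOn ℝ S F) {a b : ℝ}
    (ha : a ∈ S) (hb : b ∈ S) (hd : DifferentiableAt ℝ F a) :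
    deriv F a * (b - a) ≤ F b - F a := by
  rcases lt_trichotomy a b with hab | rfl | hab
  · have h1 := hf.deriv_le_slope ha hb hab hd
    rw [slope_def_field] at h1
    have h2 := (le_div_iff₀ (by linarith)).mp h1
    linarith
  · simp
  · have h1 := hf.slope_le_deriv hb ha hab hd
    rw [slope_def_field] at h1
    have h2 := (div_le_iff₀ (by linarith)).mp h1
    nlinarith

lemma deriv_odd {K : ℝ → ℝ} (heven : ∀ s, K (-s) = K s) (s : ℝ) :
    deriv K (-s) = -deriv K s := by
  have h1 : (fun x => K (-x)) = K := funext heven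
  have h2 := deriv_comp_neg (f := K) (x := s)
  rw [h1] at h2
  linarith

lemma persp_ineq {H : ℝ → ℝ} (hH : ConvexOn ℝ (Set.Ioi 0) H) {u r r' : ℝ}
    (hu : 0 < u) (hr : 0 < r) (hr' : 0 < r') (hd : DifferentiableAt ℝ H (u / r')) :
    H (u / r') * r' - H (u / r) * r ≤ -(u / r' * deriv H (u / r') - H (u / r')) * (r' - r) := by
  have hs : u / r ∈ Set.Ioi (0 : ℝ) := div_pos hu hr
  have hs' : u / r' ∈ Set.Ioi (0 : ℝ) := div_pos hu hr'
  have key := grad_ineq hH hs' hs hd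
  have goalkey : H (u / r') * r' - H (u / r) * r + (u / r' * deriv H (u / r') - H (u / r')) * (r' - r)
      = r * ((H (u / r') - H (u / r)) + deriv H (u / r') * (u / r - u / r')) := by
    field_simp
    ring
  nlinarith [mul_le_mul_of_nonneg_left key hr.le]

lemma abel_sum (M : ℕ) (hM : 1 ≤ M) (G d : ℕ → ℝ) (hd0 : d 0 = 0) (hdM : d M = 0) :
    ∑ i ∈ Finset.Icc 1 M, -G i * (d i - d (i - 1))
      = ∑ i ∈ Finset.Ioo 0 M, d i * (G (i + 1) - G i) := by
  have h1 : Finset.Icc 1 M = Finset.Ico 1 (M + 1) := by rw [Finset.Ico_add_one_right_eq_Icc]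
  have h2 : Finset.Ioo 0 M = Finset.Ico 1 M := by ext i; simp; omega
  rw [h1, h2, Finset.sum_Ico_eq_sum_range, Finset.sum_Ico_eq_sum_range]
  simp only [show M + 1 - 1 = M from by omega, show ∀ i : ℕ, 1 + i - 1 = i from fun i => by omega,
    show ∀ i : ℕ, 1 + i = i + 1 from fun i => by omega]
  obtain ⟨m, rfl⟩ : ∃ m, M = m + 1 := ⟨M - 1, by omega⟩
  simp only [Nat.add_sub_cancel]
  rw [Finset.sum_congr rfl (fun i _ => show -G (i+1) * (d (i+1) - d i)
      = -(G (i+1) * d (i+1)) + G (i+1) * d i from by ring), Finset.sum_add_distrib,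
    Finset.sum_range_succ (fun i => -(G (i+1) * d (i+1))) m,
    Finset.sum_range_succ' (fun i => G (i+1) * d i) m]
  rw [hd0, show d (m+1) = 0 from hdM]
  simp only [mul_zero, neg_zero, add_zero, zero_add]
  rw [← Finset.sum_add_distrib]
  exact Finset.sum_congr rfl fun i _ => by ring

lemma symm_sum (I : Finset ℕ) (m p d : ℕ → ℝ) (g : ℝ → ℝ) (hodd : ∀ s, g (-s) = -g s) :
    ∑ i ∈ I, ∑ j ∈ I, m i * m j * (g (p i - p j) * (d i - d j))
      = 2 * ∑ i ∈ I, m i * d i * ∑ j ∈ I, m j * g (p i - p j) := by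
  have hswap : ∑ i ∈ I, ∑ j ∈ I, m i * m j * (g (p i - p j) * d j)
      = ∑ i ∈ I, ∑ j ∈ I, -(m i * m j * (g (p i - p j) * d i)) := by
    rw [Finset.sum_comm]
    refine Finset.sum_congr rfl fun i _ => Finset.sum_congr rfl fun j _ => ?_
    rw [show p j - p i = -(p i - p j) from by ring, hodd]
    ring
  calc ∑ i ∈ I, ∑ j ∈ I, m i * m j * (g (p i - p j) * (d i - d j))
      = ∑ i ∈ I, ∑ j ∈ I, (m i * m j * (g (p i - p j) * d i)
          - m i * m j * (g (p i - p j) * d j)) := by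
        refine Finset.sum_congr rfl fun i _ => Finset.sum_congr rfl fun j _ => by ring
    _ = ∑ i ∈ I, ∑ j ∈ I, m i * m j * (g (p i - p j) * d i)
          - ∑ i ∈ I, ∑ j ∈ I, m i * m j * (g (p i - p j) * d j) := by
        simp [Finset.sum_sub_distrib]
    _ = 2 * ∑ i ∈ I, m i * d i * ∑ j ∈ I, m j * g (p i - p j) := by
        rw [hswap]
        simp only [Finset.sum_neg_distrib]
        rw [sub_neg_eq_add, ← two_mul]
        congr 1
        refine Finset.sum_congr rfl fun i _ => ?_
        rw [Finset.mul_sum]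
        exact Finset.sum_congr rfl fun j _ => by ring
lemma one_step (M : ℕ) (hM : 2 ≤ M) (X0 XM : ℝ) {h τ : ℝ} (hh : 0 < h) (hτ : 0 < τ)
    (H f Vc Ve Wc We : ℝ → ℝ)
    (hHconv : ConvexOn ℝ (Set.Ioi 0) H) (hHreg : ContDiffOn ℝ 1 H (Set.Ioi 0))
    (hVcconv : ConvexOn ℝ Set.univ Vc) (hVcreg : ContDiff ℝ 1 Vc)
    (hVeconv : ConvexOn ℝ Set.univ Ve) (hVereg : ContDiff ℝ 1 Ve)
    (hWcconv : ConvexOn ℝ Set.univ Wc) (hWcreg : ContDiff ℝ 1 Wc)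
    (hWeconv : ConvexOn ℝ Set.univ We) (hWereg : ContDiff ℝ 1 We)
    (hWceven : ∀ s : ℝ, Wc (-s) = Wc s) (hWeeven : ∀ s : ℝ, We (-s) = We s)
    (u0 u0half : ℕ → ℝ)
    (hu0 : ∀ i ≤ M, 0 < u0 i)
    (hu0half : ∀ i, 1 ≤ i → i ≤ M → 0 < u0half i)
    (z y : ℕ → ℝ) (hz : inQ M X0 XM z) (hy : inQ M X0 XM y)
    (hupd : SchemeUpdate M h τ H f Vc Ve Wc We u0 u0half z y) :
    EN M h H (fun s => Vc s - Ve s) (fun s => Wc s - We s) u0 u0half y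
      + τ * ipE M h (fun i => cCoef M h f u0 z i * ((y i - z i) / τ)) (fun i => (y i - z i) / τ)
      ≤ EN M h H (fun s => Vc s - Ve s) (fun s => Wc s - We s) u0 u0half z := by
  have hM1 : 1 ≤ M := by omega
  have hd0 : y 0 - z 0 = 0 := by rw [hy.1, hz.1, sub_self]
  have hdM : y M - z M = 0 := by rw [hy.2.1, hz.2.1, sub_self]
  have hDhz : ∀ i, 1 ≤ i → i ≤ M → 0 < DhOp h z i := fun i h1 h2 =>
    div_pos (sub_pos.mpr (hz.2.2 i h1 h2)) hh
  have hDhy : ∀ i, 1 ≤ i → i ≤ M → 0 < DhOp h y i := fun i h1 h2 =>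
    div_pos (sub_pos.mpr (hy.2.2 i h1 h2)) hh
  have hHd : ∀ s : ℝ, 0 < s → DifferentiableAt ℝ H s := fun s hs =>
    ((hHreg.differentiableOn one_ne_zero) s (Set.mem_Ioi.mpr hs)).differentiableAt
      (isOpen_Ioi.mem_nhds (Set.mem_Ioi.mpr hs))
  -- Part 1 : the internal-energy difference
  have hB1 : h * ∑ i ∈ Finset.Icc 1 M, H (u0half i / DhOp h y i) * DhOp h y i
      - h * ∑ i ∈ Finset.Icc 1 M, H (u0half i / DhOp h z i) * DhOp h z i
      ≤ ∑ i ∈ Finset.Ioo 0 M, (y i - z i) *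
          (Gcell h H u0half y (i + 1) - Gcell h H u0half y i) := by
    have step1 : ∀ i ∈ Finset.Icc 1 M,
        H (u0half i / DhOp h y i) * DhOp h y i - H (u0half i / DhOp h z i) * DhOp h z i
        ≤ -Gcell h H u0half y i * (((y i - z i) - (y (i - 1) - z (i - 1))) / h) := by
      intro i hi
      simp only [Finset.mem_Icc] at hi
      have hu := hu0half i hi.1 hi.2
      have h2 : DhOp h y i - DhOp h z i = ((y i - z i) - (y (i - 1) - z (i - 1))) / h := by
        rw [DhOp, DhOp]; ring
      have h1 := persp_ineq hHconv hu (hDhz i hi.1 hi.2) (hDhy i hi.1 hi.2)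
        (hHd _ (div_pos hu (hDhy i hi.1 hi.2)))
      rw [Gcell, ← h2]
      exact h1
    calc h * ∑ i ∈ Finset.Icc 1 M, H (u0half i / DhOp h y i) * DhOp h y i
        - h * ∑ i ∈ Finset.Icc 1 M, H (u0half i / DhOp h z i) * DhOp h z i
        = h * ∑ i ∈ Finset.Icc 1 M, (H (u0half i / DhOp h y i) * DhOp h y i
            - H (u0half i / DhOp h z i) * DhOp h z i) := by
          rw [Finset.sum_sub_distrib, mul_sub]
      _ ≤ h * ∑ i ∈ Finset.Icc 1 M, -Gcell h H u0half y i *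
            (((y i - z i) - (y (i - 1) - z (i - 1))) / h) :=
          mul_le_mul_of_nonneg_left (Finset.sum_le_sum step1) hh.le
      _ = ∑ i ∈ Finset.Icc 1 M, -Gcell h H u0half y i *
            ((y i - z i) - (y (i - 1) - z (i - 1))) := by
          rw [Finset.mul_sum]
          exact Finset.sum_congr rfl fun i _ => by field_simp
      _ = ∑ i ∈ Finset.Ioo 0 M, (y i - z i) *
            (Gcell h H u0half y (i + 1) - Gcell h H u0half y i) :=
          abel_sum M hM1 (Gcell h H u0half y) (fun i => y i - z i) hd0 hdM
  -- Part 2 : the external-potential difference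
  have hB2 : ipE M h u0 (fun i => Vc (y i) - Ve (y i))
      - ipE M h u0 (fun i => Vc (z i) - Ve (z i))
      ≤ ∑ i ∈ Finset.Icc 0 M, wtN M h i *
          (u0 i * ((deriv Vc (y i) - deriv Ve (z i)) * (y i - z i))) := by
    rw [ipE_wt M hM1, ipE_wt M hM1, ← Finset.sum_sub_distrib]
    apply Finset.sum_le_sum
    intro i hi
    simp only [Finset.mem_Icc] at hi
    have hui := hu0 i hi.2
    have g1 := grad_ineq hVcconv (Set.mem_univ (y i)) (Set.mem_univ (z i))
      ((hVcreg.differentiable one_ne_zero).differentiableAt)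
    have g2 := grad_ineq hVeconv (Set.mem_univ (z i)) (Set.mem_univ (y i))
      ((hVereg.differentiable one_ne_zero).differentiableAt)
    have comb : (Vc (y i) - Ve (y i)) - (Vc (z i) - Ve (z i))
        ≤ (deriv Vc (y i) - deriv Ve (z i)) * (y i - z i) := by nlinarith [g1, g2]
    have hw := wtN_nonneg M hh.le i
    nlinarith [mul_le_mul_of_nonneg_left comb (mul_nonneg hw hui.le)]
  -- Part 3 : the interaction-energy difference
  have convS : ∀ (p : ℕ → ℝ) (K : ℝ → ℝ) (i : ℕ), Shat M h K u0 p i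
      = ∑ j ∈ Finset.Icc 0 M, (wtN M h j * u0 j) * K (p i - p j) := by
    intro p K i
    rw [Shat, ipE_wt M hM1]
    exact Finset.sum_congr rfl fun j _ => by ring
  have conv2 : ∀ p : ℕ → ℝ, ipE M h u0 (fun i => Shat M h (fun s => Wc s - We s) u0 p i)
      = ∑ i ∈ Finset.Icc 0 M, ∑ j ∈ Finset.Icc 0 M, (wtN M h i * u0 i) * (wtN M h j * u0 j)
          * (Wc (p i - p j) - We (p i - p j)) := by
    intro p
    rw [ipE_wt M hM1]
    refine Finset.sum_congr rfl fun i _ => ?_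
    rw [convS p _ i, Finset.mul_sum, Finset.mul_sum]
    exact Finset.sum_congr rfl fun j _ => by ring
  have hB3 : 1 / 2 * ipE M h u0 (fun i => Shat M h (fun s => Wc s - We s) u0 y i)
      - 1 / 2 * ipE M h u0 (fun i => Shat M h (fun s => Wc s - We s) u0 z i)
      ≤ ∑ i ∈ Finset.Icc 0 M, wtN M h i *
          (u0 i * ((Shat M h (deriv Wc) u0 y i - Shat M h (deriv We) u0 z i) * (y i - z i))) := by
    have oddWc := deriv_odd hWceven
    have oddWe := deriv_odd hWeeven
    have hmn : ∀ i ∈ Finset.Icc 0 M, ∀ j ∈ Finset.Icc 0 M,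
        (0:ℝ) ≤ (wtN M h i * u0 i) * (wtN M h j * u0 j) := by
      intro i hi j hj
      simp only [Finset.mem_Icc] at hi hj
      exact mul_nonneg (mul_nonneg (wtN_nonneg M hh.le i) (hu0 i hi.2).le)
        (mul_nonneg (wtN_nonneg M hh.le j) (hu0 j hj.2).le)
    have hD : ∑ i ∈ Finset.Icc 0 M, ∑ j ∈ Finset.Icc 0 M, (wtN M h i * u0 i) * (wtN M h j * u0 j)
          * (Wc (y i - y j) - We (y i - y j))
        - ∑ i ∈ Finset.Icc 0 M, ∑ j ∈ Finset.Icc 0 M, (wtN M h i * u0 i) * (wtN M h j * u0 j)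
          * (Wc (z i - z j) - We (z i - z j))
        ≤ ∑ i ∈ Finset.Icc 0 M, ∑ j ∈ Finset.Icc 0 M, (wtN M h i * u0 i) * (wtN M h j * u0 j)
            * (deriv Wc (y i - y j) * ((y i - z i) - (y j - z j)))
          - ∑ i ∈ Finset.Icc 0 M, ∑ j ∈ Finset.Icc 0 M, (wtN M h i * u0 i) * (wtN M h j * u0 j)
            * (deriv We (z i - z j) * ((y i - z i) - (y j - z j))) := by
      rw [← Finset.sum_sub_distrib, ← Finset.sum_sub_distrib]
      apply Finset.sum_le_sum
      intro i hi
      rw [← Finset.sum_sub_distrib, ← Finset.sum_sub_distrib]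
      apply Finset.sum_le_sum
      intro j hj
      have g1 := grad_ineq hWcconv (Set.mem_univ (y i - y j)) (Set.mem_univ (z i - z j))
        ((hWcreg.differentiable one_ne_zero).differentiableAt)
      have g2 := grad_ineq hWeconv (Set.mem_univ (z i - z j)) (Set.mem_univ (y i - y j))
        ((hWereg.differentiable one_ne_zero).differentiableAt)
      nlinarith [mul_le_mul_of_nonneg_left (show (Wc (y i - y j) - We (y i - y j))
          - (Wc (z i - z j) - We (z i - z j))
          ≤ deriv Wc (y i - y j) * ((y i - z i) - (y j - z j))
            - deriv We (z i - z j) * ((y i - z i) - (y j - z j)) from by nlinarith [g1, g2])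
        (hmn i hi j hj)]
    have s1 : ∑ i ∈ Finset.Icc 0 M, ∑ j ∈ Finset.Icc 0 M, (fun i => wtN M h i * u0 i) i
          * (fun i => wtN M h i * u0 i) j * (deriv Wc (y i - y j) * ((y i - z i) - (y j - z j)))
        = 2 * ∑ i ∈ Finset.Icc 0 M, (fun i => wtN M h i * u0 i) i * (y i - z i)
            * ∑ j ∈ Finset.Icc 0 M, (fun i => wtN M h i * u0 i) j * deriv Wc (y i - y j) :=
      symm_sum (Finset.Icc 0 M) (fun i => wtN M h i * u0 i) y (fun i => y i - z i)
        (deriv Wc) oddWc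
    have s2 : ∑ i ∈ Finset.Icc 0 M, ∑ j ∈ Finset.Icc 0 M, (fun i => wtN M h i * u0 i) i
          * (fun i => wtN M h i * u0 i) j * (deriv We (z i - z j) * ((y i - z i) - (y j - z j)))
        = 2 * ∑ i ∈ Finset.Icc 0 M, (fun i => wtN M h i * u0 i) i * (y i - z i)
            * ∑ j ∈ Finset.Icc 0 M, (fun i => wtN M h i * u0 i) j * deriv We (z i - z j) :=
      symm_sum (Finset.Icc 0 M) (fun i => wtN M h i * u0 i) z (fun i => y i - z i)
        (deriv We) oddWe
    simp only at s1 s2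
    have hrhs : ∑ i ∈ Finset.Icc 0 M, wtN M h i *
          (u0 i * ((Shat M h (deriv Wc) u0 y i - Shat M h (deriv We) u0 z i) * (y i - z i)))
        = ∑ i ∈ Finset.Icc 0 M, (wtN M h i * u0 i * (y i - z i)
            * ∑ j ∈ Finset.Icc 0 M, wtN M h j * u0 j * deriv Wc (y i - y j)
          - wtN M h i * u0 i * (y i - z i)
            * ∑ j ∈ Finset.Icc 0 M, wtN M h j * u0 j * deriv We (z i - z j)) := by
      refine Finset.sum_congr rfl fun i _ => ?_
      rw [convS y (deriv Wc) i, convS z (deriv We) i]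
      ring
    rw [conv2 y, conv2 z, hrhs, Finset.sum_sub_distrib]
    linarith [hD, s1, s2]
  -- the scheme identity, node by node
  have per : ∀ i ∈ Finset.Ioo 0 M,
      (y i - z i) * (Gcell h H u0half y (i + 1) - Gcell h H u0half y i)
        + h * (u0 i * ((deriv Vc (y i) - deriv Ve (z i)) * (y i - z i)))
        + h * (u0 i * ((Shat M h (deriv Wc) u0 y i - Shat M h (deriv We) u0 z i) * (y i - z i)))
      = -τ * (h * (cCoef M h f u0 z i * ((y i - z i) / τ) * ((y i - z i) / τ))) := by
    intro i hi
    simp only [Finset.mem_Ioo] at hi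
    have e := hupd i hi.1 (by omega)
    simp only [dhOp] at e
    have hh' : h ≠ 0 := hh.ne'
    have hτ' : τ ≠ 0 := hτ.ne'
    field_simp at e
    obtain ⟨q, hqe⟩ : ∃ q : ℝ, y i - z i = q * τ := ⟨(y i - z i) / τ, by field_simp⟩
    rw [hqe] at e ⊢
    rw [mul_div_cancel_right₀ q hτ']
    linear_combination q * e
  -- reduce the Icc sums to interior sums
  have hS2 : ∑ i ∈ Finset.Icc 0 M, wtN M h i *
        (u0 i * ((deriv Vc (y i) - deriv Ve (z i)) * (y i - z i)))
      = ∑ i ∈ Finset.Ioo 0 M, h * (u0 i * ((deriv Vc (y i) - deriv Ve (z i)) * (y i - z i))) := by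
    rw [sum_Icc_of_ends_zero M hM1 _ (by rw [hd0]; ring) (by rw [hdM]; ring)]
    refine Finset.sum_congr rfl fun i hi => ?_
    simp only [Finset.mem_Ioo] at hi
    rw [wtN, if_neg (by omega)]
  have hS3 : ∑ i ∈ Finset.Icc 0 M, wtN M h i *
        (u0 i * ((Shat M h (deriv Wc) u0 y i - Shat M h (deriv We) u0 z i) * (y i - z i)))
      = ∑ i ∈ Finset.Ioo 0 M, h *
        (u0 i * ((Shat M h (deriv Wc) u0 y i - Shat M h (deriv We) u0 z i) * (y i - z i))) := by
    rw [sum_Icc_of_ends_zero M hM1 _ (by rw [hd0]; ring) (by rw [hdM]; ring)]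
    refine Finset.sum_congr rfl fun i hi => ?_
    simp only [Finset.mem_Ioo] at hi
    rw [wtN, if_neg (by omega)]
  have hDiss : ipE M h (fun i => cCoef M h f u0 z i * ((y i - z i) / τ)) (fun i => (y i - z i) / τ)
      = ∑ i ∈ Finset.Ioo 0 M, h * (cCoef M h f u0 z i * ((y i - z i) / τ) * ((y i - z i) / τ)) := by
    rw [ipE_wt M hM1,
      sum_Icc_of_ends_zero M hM1 _ (by rw [hd0]; ring) (by rw [hdM]; ring)]
    refine Finset.sum_congr rfl fun i hi => ?_
    simp only [Finset.mem_Ioo] at hi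
    rw [wtN, if_neg (by omega)]
  have hmerge : ∑ i ∈ Finset.Ioo 0 M, (y i - z i) *
        (Gcell h H u0half y (i + 1) - Gcell h H u0half y i)
      + ∑ i ∈ Finset.Ioo 0 M, h * (u0 i * ((deriv Vc (y i) - deriv Ve (z i)) * (y i - z i)))
      + ∑ i ∈ Finset.Ioo 0 M, h *
          (u0 i * ((Shat M h (deriv Wc) u0 y i - Shat M h (deriv We) u0 z i) * (y i - z i)))
      = -τ * ∑ i ∈ Finset.Ioo 0 M,
          h * (cCoef M h f u0 z i * ((y i - z i) / τ) * ((y i - z i) / τ)) := by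
    rw [← Finset.sum_add_distrib, ← Finset.sum_add_distrib, Finset.mul_sum,
      Finset.sum_congr rfl per]
  rw [← hDiss] at hmerge
  simp only [EN]
  linarith [hB1, hB2, hB3, hS2, hS3, hmerge]
/-- Part of **Theorem 4.4**: if the discrete energy is bounded below on `Q`, then the
discrete dissipation terms tend to zero along the scheme iterates. -/
theorem dissipation_tendsto_zero
    (M : ℕ) (hM : 2 ≤ M) (X0 XM : ℝ) (hX : X0 < XM)
    (h : ℝ) (hh : h = (XM - X0) / (M : ℝ)) (τ : ℝ) (hτ : 0 < τ)
    (H f Vc Ve Wc We : ℝ → ℝ)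
    (hHconv : ConvexOn ℝ (Set.Ioi 0) H) (hHreg : ContDiffOn ℝ 1 H (Set.Ioi 0))
    (hf : ∀ s : ℝ, 0 < s → 0 < f s)
    (hVcconv : ConvexOn ℝ Set.univ Vc) (hVcreg : ContDiff ℝ 1 Vc)
    (hVeconv : ConvexOn ℝ Set.univ Ve) (hVereg : ContDiff ℝ 1 Ve)
    (hWcconv : ConvexOn ℝ Set.univ Wc) (hWcreg : ContDiff ℝ 1 Wc)
    (hWeconv : ConvexOn ℝ Set.univ We) (hWereg : ContDiff ℝ 1 We)
    (hWceven : ∀ s : ℝ, Wc (-s) = Wc s) (hWeeven : ∀ s : ℝ, We (-s) = We s)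
    (u0 u0half : ℕ → ℝ)
    (hu0 : ∀ i ≤ M, 0 < u0 i)
    (hu0half : ∀ i, 1 ≤ i → i ≤ M → 0 < u0half i)
    (B : ℝ)
    (hB : ∀ z : ℕ → ℝ, inQ M X0 XM z →
      B ≤ EN M h H (fun s => Vc s - Ve s) (fun s => Wc s - We s) u0 u0half z)
    (x : ℕ → ℕ → ℝ) (hxQ : ∀ n, inQ M X0 XM (x n))
    (hupd : ∀ n, SchemeUpdate M h τ H f Vc Ve Wc We u0 u0half (x n) (x (n + 1))) :
    Tendsto (fun n =>
        ipE M h (fun i => cCoef M h f u0 (x n) i * ((x (n + 1) i - x n i) / τ))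
          (fun i => (x (n + 1) i - x n i) / τ))
      atTop (nhds 0) := by

  have hM1 : 1 ≤ M := by omega
  have hhp : 0 < h := by
    rw [hh]
    apply div_pos (by linarith)
    exact_mod_cast (by omega : 0 < M)
  set a : ℕ → ℝ := fun n =>
    ipE M h (fun i => cCoef M h f u0 (x n) i * ((x (n + 1) i - x n i) / τ))
      (fun i => (x (n + 1) i - x n i) / τ) with hadef
  have ha : ∀ n, 0 ≤ a n := by
    intro n
    show (0:ℝ) ≤ ipE M h (fun i => cCoef M h f u0 (x n) i * ((x (n + 1) i - x n i) / τ))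
      (fun i => (x (n + 1) i - x n i) / τ)
    rw [ipE_wt M hM1]
    apply Finset.sum_nonneg
    intro i hi
    simp only [Finset.mem_Icc] at hi
    by_cases h0 : i = 0
    · subst h0
      rw [(hxQ (n + 1)).1, (hxQ n).1]
      simp
    by_cases hMi : i = M
    · subst hMi
      rw [(hxQ (n + 1)).2.1, (hxQ n).2.1]
      simp
    have hQ := hxQ n
    have hd1 : x n (i - 1) < x n i := hQ.2.2 i (by omega) (by omega)
    have hd2 : x n i < x n (i + 1) := by
      have := hQ.2.2 (i + 1) (by omega) (by omega)
      simpa using this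
    have hDt : 0 < DtOp M h (x n) i := by
      rw [DtOp, if_neg h0, if_neg hMi]
      apply div_pos (by linarith) (by linarith)
    have hc : 0 ≤ cCoef M h f u0 (x n) i := by
      rw [cCoef]
      apply div_nonneg (sq_nonneg _)
      exact (mul_pos hDt (hf _ (div_pos (hu0 i hi.2) hDt))).le
    refine mul_nonneg (wtN_nonneg M hhp.le i) ?_
    rw [mul_assoc]
    exact mul_nonneg hc (mul_self_nonneg _)
  have hE : ∀ n, EN M h H (fun s => Vc s - Ve s) (fun s => Wc s - We s) u0 u0half (x (n + 1))
      + τ * a n ≤ EN M h H (fun s => Vc s - Ve s) (fun s => Wc s - We s) u0 u0half (x n) :=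
    fun n => one_step M hM X0 XM hhp hτ H f Vc Ve Wc We hHconv hHreg hVcconv hVcreg
      hVeconv hVereg hWcconv hWcreg hWeconv hWereg hWceven hWeeven u0 u0half hu0 hu0half
      (x n) (x (n + 1)) (hxQ n) (hxQ (n + 1)) (hupd n)
  have mono : ∀ n, EN M h H (fun s => Vc s - Ve s) (fun s => Wc s - We s) u0 u0half (x n)
      + τ * ∑ k ∈ Finset.range n, a k
      ≤ EN M h H (fun s => Vc s - Ve s) (fun s => Wc s - We s) u0 u0half (x 0) := by
    intro n
    induction n with
    | zero => simp
    | succ n ih =>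
      rw [Finset.sum_range_succ]
      have := hE n
      nlinarith [hE n, ih]
  have key : ∀ n, ∑ k ∈ Finset.range n, a k
      ≤ (EN M h H (fun s => Vc s - Ve s) (fun s => Wc s - We s) u0 u0half (x 0) - B) / τ := by
    intro n
    rw [le_div_iff₀ hτ]
    have h1 := mono n
    have h2 := hB (x n) (hxQ n)
    nlinarith [h1, h2]
  exact (summable_of_sum_range_le ha key).tendsto_atTop_zero
end
end

section
/- Assume in addition that H is superlinear: H(s)/s → ∞ as s → ∞. Then for every xⁿ ∈ Q: (i) J(z_k) → +∞ along any sequence (z_k) ⊆ Q converging to a point of Q̄ \ Q; and (ii) J attains its infimum over Q at a unique point x ∈ Q. -/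
open Finset Filter

noncomputable section

lemma inQ_mono {M : ℕ} {X0 XM : ℝ} {z : ℕ → ℝ} (hz : inQ M X0 XM z) :
    ∀ b, b ≤ M → ∀ a, a ≤ b → z a ≤ z b := by
  intro b
  induction b with
  | zero => intro _ a ha; simp [Nat.le_zero.mp ha]
  | succ n ih =>
    intro hbM a ha
    rcases Nat.lt_or_ge a (n+1) with hlt | hge
    · have h1 : z a ≤ z n := ih (by omega) a (by omega)
      have h2 : z n < z (n+1) := by
        have := hz.2.2 (n+1) (by omega) hbM
        simpa using this
      linarith
    · have : a = n+1 := by omega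
      simp [this]

lemma inQ_bounds {M : ℕ} {X0 XM : ℝ} {z : ℕ → ℝ} (hz : inQ M X0 XM z) :
    ∀ i ≤ M, X0 ≤ z i ∧ z i ≤ XM :=
  fun i hi => ⟨hz.1 ▸ inQ_mono hz i hi 0 (Nat.zero_le _), hz.2.1 ▸ inQ_mono hz M le_rfl i hi⟩

lemma exists_bound_fin (M : ℕ) (a : ℕ → ℝ) : ∃ B, 0 ≤ B ∧ ∀ i ≤ M, |a i| ≤ B := by
  refine ⟨(Finset.Icc 0 M).sup' ⟨0, by simp only [Finset.mem_Icc]; omega⟩ (fun i => |a i|), ?_, fun i hi => ?_⟩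
  · exact le_trans (abs_nonneg (a 0)) (Finset.le_sup' (fun i => |a i|) (Finset.mem_Icc.mpr ⟨Nat.zero_le _, Nat.zero_le _⟩))
  · exact Finset.le_sup' (fun i => |a i|) (Finset.mem_Icc.mpr ⟨Nat.zero_le _, hi⟩)

lemma abs_ipE_le {M : ℕ} {h B : ℝ} (hh : 0 < h) (hM : 1 ≤ M) {l g : ℕ → ℝ}
    (hB : ∀ i ≤ M, |l i * g i| ≤ B) :
    |ipE M h l g| ≤ h * ((M : ℝ) * B) := by
  have hB0 : (0:ℝ) ≤ B := le_trans (abs_nonneg _) (hB 0 (Nat.zero_le _))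
  have hcast : ((M - 1 : ℕ) : ℝ) ≤ (M : ℝ) - 1 := by
    rw [Nat.cast_sub hM]; simp
  have hsum : |∑ i ∈ Finset.Ioo 0 M, l i * g i| ≤ ((M:ℝ) - 1) * B := by
    calc |∑ i ∈ Finset.Ioo 0 M, l i * g i| ≤ ∑ i ∈ Finset.Ioo 0 M, |l i * g i| :=
          Finset.abs_sum_le_sum_abs _ _
      _ ≤ ∑ _i ∈ Finset.Ioo 0 M, B :=
          Finset.sum_le_sum (fun i hi => hB i (le_of_lt (Finset.mem_Ioo.mp hi).2))
      _ = ((M - 1 : ℕ) : ℝ) * B := by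
          rw [Finset.sum_const, Nat.card_Ioo, nsmul_eq_mul]; norm_num
      _ ≤ ((M:ℝ) - 1) * B := mul_le_mul_of_nonneg_right hcast hB0
  have h0 := hB 0 (Nat.zero_le M)
  have hMb := hB M le_rfl
  have htri : |l 0 * g 0 / 2 + (∑ i ∈ Finset.Ioo 0 M, l i * g i) + l M * g M / 2|
      ≤ |l 0 * g 0| / 2 + |∑ i ∈ Finset.Ioo 0 M, l i * g i| + |l M * g M| / 2 := by
    calc |l 0 * g 0 / 2 + (∑ i ∈ Finset.Ioo 0 M, l i * g i) + l M * g M / 2|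
        ≤ |l 0 * g 0 / 2 + (∑ i ∈ Finset.Ioo 0 M, l i * g i)| + |l M * g M / 2| := abs_add_le _ _
      _ ≤ |l 0 * g 0 / 2| + |∑ i ∈ Finset.Ioo 0 M, l i * g i| + |l M * g M / 2| := by
          have := abs_add_le (l 0 * g 0 / 2) (∑ i ∈ Finset.Ioo 0 M, l i * g i)
          linarith
      _ = |l 0 * g 0| / 2 + |∑ i ∈ Finset.Ioo 0 M, l i * g i| + |l M * g M| / 2 := by
          rw [abs_div, abs_div]; norm_num
  rw [ipE, abs_mul, abs_of_pos hh]
  have hM1 : (1:ℝ) ≤ (M:ℝ) := by exact_mod_cast hM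
  have : |l 0 * g 0 / 2 + (∑ i ∈ Finset.Ioo 0 M, l i * g i) + l M * g M / 2| ≤ (M:ℝ) * B := by
    nlinarith
  nlinarith

lemma H_linear_lb {H : ℝ → ℝ} (hHconv : ConvexOn ℝ (Set.Ioi 0) H)
    (hHsup : Tendsto (fun s => H s / s) atTop atTop) :
    ∃ C : ℝ, 0 ≤ C ∧ ∀ s : ℝ, 0 < s → s - C ≤ H s := by
  obtain ⟨s1, hs1⟩ := eventually_atTop.mp (tendsto_atTop.mp hHsup 1)
  set s0 : ℝ := max s1 1 with hs0def
  have hs0pos : (0:ℝ) < s0 := lt_of_lt_of_le one_pos (le_max_right _ _)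
  have hge : ∀ s : ℝ, s0 ≤ s → s ≤ H s := by
    intro s hs
    have hspos : 0 < s := lt_of_lt_of_le hs0pos hs
    have := hs1 s (le_trans (le_max_left _ _) hs)
    rw [le_div_iff₀ hspos] at this
    linarith
  set m : ℝ := H (s0 + 1) - H s0 with hm
  set K : ℝ := H s0 - max m 0 * s0 with hK
  have hlb : ∀ s : ℝ, 0 < s → s ≤ s0 → K ≤ H s := by
    intro s hs hss0
    rcases eq_or_lt_of_le hss0 with rfl | hlt
    · nlinarith [le_max_right m 0, hs0pos]
    · have hslope := hHconv.slope_mono_adjacent (Set.mem_Ioi.mpr hs)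
        (Set.mem_Ioi.mpr (by linarith : (0:ℝ) < s0 + 1)) hlt (by linarith)
      have hden : (0:ℝ) < s0 - s := by linarith
      rw [div_le_div_iff₀ hden (by norm_num)] at hslope
      nlinarith [le_max_left m 0, le_max_right m 0]
  refine ⟨max 0 (s0 - K), le_max_left _ _, fun s hs => ?_⟩
  rcases le_or_gt s s0 with hle | hlt
  · have := hlb s hs hle
    have := le_max_right 0 (s0 - K)
    linarith
  · have := hge s hlt.le
    have := le_max_left (0:ℝ) (s0 - K)
    linarith

lemma H_persp_mid {H : ℝ → ℝ} (hHconv : ConvexOn ℝ (Set.Ioi 0) H)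
    {c d1 d2 : ℝ} (hc : 0 < c) (h1 : 0 < d1) (h2 : 0 < d2) :
    H (c / ((d1 + d2) / 2)) * ((d1 + d2) / 2) ≤ (H (c / d1) * d1 + H (c / d2) * d2) / 2 := by
  set d : ℝ := (d1 + d2) / 2 with hd
  have hdpos : 0 < d := by rw [hd]; linarith
  have ha : (0:ℝ) ≤ d1 / (2 * d) := by positivity
  have hb : (0:ℝ) ≤ d2 / (2 * d) := by positivity
  have hab : d1 / (2 * d) + d2 / (2 * d) = 1 := by
    rw [hd]; field_simp
  have key := hHconv.2 (Set.mem_Ioi.mpr (show (0:ℝ) < c / d1 by positivity))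
    (Set.mem_Ioi.mpr (show (0:ℝ) < c / d2 by positivity)) ha hb hab
  have harg : (d1 / (2 * d)) • (c / d1) + (d2 / (2 * d)) • (c / d2) = c / d := by
    simp only [smul_eq_mul]
    rw [hd]; field_simp; ring
  rw [harg, smul_eq_mul, smul_eq_mul] at key
  have := mul_le_mul_of_nonneg_right key hdpos.le
  calc H (c / d) * d ≤ (d1 / (2 * d) * H (c / d1) + d2 / (2 * d) * H (c / d2)) * d := this
    _ = (H (c / d1) * d1 + H (c / d2) * d2) / 2 := by field_simp

lemma persp_tendsto {H : ℝ → ℝ} (hHsup : Tendsto (fun s => H s / s) atTop atTop)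
    {c : ℝ} (hc : 0 < c) :
    Tendsto (fun d : ℝ => H (c / d) * d) (nhdsWithin 0 (Set.Ioi 0)) atTop := by
  have h1 : Tendsto (fun d : ℝ => c / d) (nhdsWithin 0 (Set.Ioi 0)) atTop := by
    simp only [div_eq_mul_inv]
    exact tendsto_inv_nhdsGT_zero.const_mul_atTop hc
  have h2 : Tendsto (fun d : ℝ => c * (H (c / d) / (c / d))) (nhdsWithin 0 (Set.Ioi 0)) atTop :=
    (hHsup.comp h1).const_mul_atTop hc
  refine h2.congr' ?_
  filter_upwards [self_mem_nhdsWithin] with d hd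
  have hdpos : (0:ℝ) < d := hd
  field_simp

lemma cCoef_pos {M : ℕ} {X0 XM : ℝ} {h : ℝ} (hh : 0 < h) {f : ℝ → ℝ} {u0 xn : ℕ → ℝ}
    (hf : ∀ s : ℝ, 0 < s → 0 < f s) (hu0 : ∀ i ≤ M, 0 < u0 i)
    (hM : 2 ≤ M) (hxn : inQ M X0 XM xn) :
    ∀ i ≤ M, 0 < cCoef M h f u0 xn i := by
  intro i hi
  have hD : 0 < DtOp M h xn i := by
    rw [DtOp]
    rcases eq_or_ne i 0 with rfl | h0
    · simp only [if_pos rfl]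
      have h01 := hxn.2.2 1 le_rfl (by omega)
      norm_num at h01
      exact div_pos (by linarith) hh
    · rcases eq_or_ne i M with h2 | h2
      · rw [if_neg h0, if_pos h2]
        have := hxn.2.2 M (by omega) le_rfl
        exact div_pos (by linarith) hh
      · rw [if_neg h0, if_neg h2]
        have ha := hxn.2.2 i (by omega) (by omega)
        have hb := hxn.2.2 (i+1) (by omega) (by omega)
        simp only [Nat.add_sub_cancel] at hb
        exact div_pos (by linarith) (by linarith)
  have hu := hu0 i hi
  have hfpos := hf _ (div_pos hu hD)
  rw [cCoef]
  exact div_pos (pow_pos hu 2) (mul_pos hD hfpos)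

lemma quad_nonneg {M : ℕ} {h : ℝ} (hh : 0 < h) {c w : ℕ → ℝ} (hc : ∀ i ≤ M, 0 ≤ c i) :
    0 ≤ ipE M h (fun i => c i * w i) w := by
  rw [ipE]
  have hs : 0 ≤ ∑ i ∈ Finset.Ioo 0 M, c i * w i * w i := by
    apply Finset.sum_nonneg
    intro i hi
    rw [mul_assoc]
    exact mul_nonneg (hc i (le_of_lt (Finset.mem_Ioo.mp hi).2)) (mul_self_nonneg _)
  have t0 : 0 ≤ c 0 * w 0 * w 0 := by
    rw [mul_assoc]; exact mul_nonneg (hc 0 (Nat.zero_le _)) (mul_self_nonneg _)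
  have tM : 0 ≤ c M * w M * w M := by
    rw [mul_assoc]; exact mul_nonneg (hc M le_rfl) (mul_self_nonneg _)
  exact mul_nonneg hh.le (by linarith)

lemma Jfun_lb (M : ℕ) (hM : 2 ≤ M) (X0 XM : ℝ) (hX : X0 < XM)
    (h : ℝ) (hh : h = (XM - X0) / (M:ℝ)) (τ : ℝ) (hτ : 0 < τ)
    (H f Vc Ve Wc We : ℝ → ℝ)
    (hHconv : ConvexOn ℝ (Set.Ioi 0) H)
    (hf : ∀ s : ℝ, 0 < s → 0 < f s)
    (hVcreg : ContDiff ℝ 1 Vc)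
    (hWcreg : ContDiff ℝ 1 Wc)
    (u0 u0half : ℕ → ℝ) (hu0 : ∀ i ≤ M, 0 < u0 i)
    (hu0half : ∀ i, 1 ≤ i → i ≤ M → 0 < u0half i)
    (hHsup : Tendsto (fun s => H s / s) atTop atTop)
    (xn : ℕ → ℝ) (hxn : inQ M X0 XM xn) :
    ∃ C : ℝ, ∀ z, inQ M X0 XM z → ∀ i, 1 ≤ i → i ≤ M →
      H (u0half i * h / (z i - z (i-1))) * (z i - z (i-1)) - C
        ≤ Jfun M h τ H f Vc Ve Wc We u0 u0half xn z := by
  have hMpos : (0:ℝ) < (M:ℝ) := by exact_mod_cast (by omega : 0 < M)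
  have hhpos : 0 < h := by rw [hh]; exact div_pos (by linarith) hMpos
  have hM1 : 1 ≤ M := by omega
  set L : ℝ := XM - X0 with hL
  have hLpos : 0 < L := by rw [hL]; linarith
  obtain ⟨C0, hC00, hHlb⟩ := H_linear_lb hHconv hHsup
  obtain ⟨BV, hBV0, hBV⟩ : ∃ B, 0 ≤ B ∧ ∀ t ∈ Set.Icc X0 XM, |Vc t| ≤ B := by
    obtain ⟨B, hB⟩ := isCompact_Icc.exists_bound_of_continuousOn
      (hVcreg.continuous.continuousOn (s := Set.Icc X0 XM))
    exact ⟨max B 0, le_max_right _ _, fun t ht => le_trans (hB t ht) (le_max_left _ _)⟩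
  obtain ⟨BW, hBW0, hBW⟩ : ∃ B, 0 ≤ B ∧ ∀ t ∈ Set.Icc (-L) L, |Wc t| ≤ B := by
    obtain ⟨B, hB⟩ := isCompact_Icc.exists_bound_of_continuousOn
      (hWcreg.continuous.continuousOn (s := Set.Icc (-L) L))
    exact ⟨max B 0, le_max_right _ _, fun t ht => le_trans (hB t ht) (le_max_left _ _)⟩
  obtain ⟨Bu, hBu0, hBu⟩ := exists_bound_fin M u0
  obtain ⟨Ba, hBa0, hBa⟩ := exists_bound_fin M (fun i => u0 i * deriv Ve (xn i))
  obtain ⟨Bb, hBb0, hBb⟩ := exists_bound_fin M (fun i => u0 i * Shat M h (deriv We) u0 xn i)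
  set R : ℝ := max |X0| |XM| with hR
  refine ⟨(M:ℝ) * (C0 * L) + h * ((M:ℝ) * (Bu * BV))
    + 1/2 * (h * ((M:ℝ) * (Bu * (h * ((M:ℝ) * (BW * Bu))))))
    + h * ((M:ℝ) * (Ba * R)) + h * ((M:ℝ) * (Bb * R)), ?_⟩
  intro z hz i h1i hiM
  have hzb := inQ_bounds hz
  have hgap : ∀ j, 1 ≤ j → j ≤ M → 0 < z j - z (j-1) ∧ z j - z (j-1) ≤ L := by
    intro j h1 h2
    refine ⟨by linarith [hz.2.2 j h1 h2], ?_⟩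
    have ha := (hzb j h2).2
    have hb := (hzb (j-1) (by omega)).1
    rw [hL]; linarith
  have habs : ∀ j ≤ M, |z j| ≤ R := by
    intro j hj
    have h1 := (hzb j hj).1; have h2 := (hzb j hj).2
    rw [abs_le]
    constructor
    · have ha : -|X0| ≤ X0 := neg_abs_le X0
      have hbb := le_max_left |X0| |XM|
      rw [hR]; linarith
    · have ha : XM ≤ |XM| := le_abs_self XM
      have hbb := le_max_right |X0| |XM|
      rw [hR]; linarith
  have hcnn : ∀ j ≤ M, 0 ≤ cCoef M h f u0 xn j :=
    fun j hj => (cCoef_pos hhpos hf hu0 hM hxn j hj).le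
  have hT1 : 0 ≤ ipE M h (fun j => cCoef M h f u0 xn j * (z j - xn j)) (fun j => z j - xn j) :=
    quad_nonneg hhpos hcnn
  have hg : ∀ j, 1 ≤ j → j ≤ M → h * (H (u0half j / DhOp h z j) * DhOp h z j)
      = H (u0half j * h / (z j - z (j-1))) * (z j - z (j-1)) := by
    intro j h1 h2
    obtain ⟨hd, _⟩ := hgap j h1 h2
    rw [DhOp, div_div_eq_mul_div]
    field_simp
  have hglb : ∀ j, 1 ≤ j → j ≤ M →
      -(C0 * L) ≤ h * (H (u0half j / DhOp h z j) * DhOp h z j) := by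
    intro j h1 h2
    obtain ⟨hd, hdL⟩ := hgap j h1 h2
    rw [hg j h1 h2]
    have hcj : 0 < u0half j * h := mul_pos (hu0half j h1 h2) hhpos
    have hs : 0 < u0half j * h / (z j - z (j-1)) := div_pos hcj hd
    have hlin := hHlb _ hs
    have hmul := mul_le_mul_of_nonneg_right hlin hd.le
    have hsd : u0half j * h / (z j - z (j-1)) * (z j - z (j-1)) = u0half j * h :=
      div_mul_cancel₀ _ (ne_of_gt hd)
    nlinarith
  have hT2 : H (u0half i * h / (z i - z (i-1))) * (z i - z (i-1)) - (M:ℝ) * (C0 * L)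
      ≤ h * ∑ j ∈ Finset.Icc 1 M, H (u0half j / DhOp h z j) * DhOp h z j := by
    rw [Finset.mul_sum]
    have hmem : i ∈ Finset.Icc 1 M := Finset.mem_Icc.mpr ⟨h1i, hiM⟩
    rw [← Finset.add_sum_erase _ _ hmem]
    have hb : ∀ j ∈ (Finset.Icc 1 M).erase i,
        -(C0 * L) ≤ h * (H (u0half j / DhOp h z j) * DhOp h z j) := by
      intro j hj
      obtain ⟨hj1, hj2⟩ := Finset.mem_Icc.mp (Finset.mem_of_mem_erase hj)
      exact hglb j hj1 hj2
    have hrest := Finset.card_nsmul_le_sum ((Finset.Icc 1 M).erase i) _ _ hb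
    rw [nsmul_eq_mul] at hrest
    have hcard : ((((Finset.Icc 1 M).erase i).card : ℕ) : ℝ) ≤ (M:ℝ) := by
      have h1 : ((Finset.Icc 1 M).erase i).card ≤ (Finset.Icc 1 M).card :=
        Finset.card_erase_le
      have h2 : (Finset.Icc 1 M).card = M := by rw [Nat.card_Icc]; omega
      exact_mod_cast h1.trans_eq h2
    have hCL : 0 ≤ C0 * L := mul_nonneg hC00 hLpos.le
    have : -((M:ℝ) * (C0 * L)) ≤ (((Finset.Icc 1 M).erase i).card : ℝ) * -(C0 * L) := by
      nlinarith [mul_le_mul_of_nonneg_right hcard hCL]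
    have hgi := hg i h1i hiM
    calc H (u0half i * h / (z i - z (i-1))) * (z i - z (i-1)) - (M:ℝ) * (C0 * L)
        ≤ h * (H (u0half i / DhOp h z i) * DhOp h z i)
            + (((Finset.Icc 1 M).erase i).card : ℝ) * -(C0 * L) := by
          rw [hgi, sub_eq_add_neg]; exact add_le_add le_rfl this
      _ ≤ _ := add_le_add le_rfl hrest
  have hT3 : |ipE M h u0 (fun j => Vc (z j))| ≤ h * ((M:ℝ) * (Bu * BV)) := by
    apply abs_ipE_le hhpos hM1
    intro j hj
    rw [abs_mul]
    exact mul_le_mul (hBu j hj) (hBV _ ⟨(hzb j hj).1, (hzb j hj).2⟩) (abs_nonneg _) hBu0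
  have hT4 : |ipE M h u0 (fun j => Shat M h Wc u0 z j)|
      ≤ h * ((M:ℝ) * (Bu * (h * ((M:ℝ) * (BW * Bu))))) := by
    apply abs_ipE_le hhpos hM1
    intro j hj
    rw [abs_mul]
    refine mul_le_mul (hBu j hj) ?_ (abs_nonneg _) hBu0
    rw [Shat]
    apply abs_ipE_le hhpos hM1
    intro k hk
    rw [abs_mul]
    refine mul_le_mul (hBW _ ?_) (hBu k hk) (abs_nonneg _) hBW0
    have ha := (hzb j hj).1; have hb := (hzb j hj).2
    have hc := (hzb k hk).1; have hd := (hzb k hk).2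
    constructor <;> [skip; skip] <;> rw [hL] <;> [linarith; linarith]
  have hT5 : |ipE M h (fun j => u0 j * deriv Ve (xn j)) z| ≤ h * ((M:ℝ) * (Ba * R)) := by
    apply abs_ipE_le hhpos hM1
    intro j hj
    rw [abs_mul]
    exact mul_le_mul (hBa j hj) (habs j hj) (abs_nonneg _) hBa0
  have hT6 : |ipE M h (fun j => u0 j * Shat M h (deriv We) u0 xn j) z|
      ≤ h * ((M:ℝ) * (Bb * R)) := by
    apply abs_ipE_le hhpos hM1
    intro j hj
    rw [abs_mul]
    exact mul_le_mul (hBb j hj) (habs j hj) (abs_nonneg _) hBb0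
  rw [Jfun]
  obtain ⟨h3a, h3b⟩ := abs_le.mp hT3
  obtain ⟨h4a, h4b⟩ := abs_le.mp hT4
  obtain ⟨h5a, h5b⟩ := abs_le.mp hT5
  obtain ⟨h6a, h6b⟩ := abs_le.mp hT6
  have hquad : 0 ≤ 1 / (2 * τ) * ipE M h (fun j => cCoef M h f u0 xn j * (z j - xn j)) (fun j => z j - xn j) :=
    mul_nonneg (by positivity) hT1
  linarith

def Snode (M : ℕ) (h : ℝ) (F : ℕ → ℝ) : ℝ :=
  h * (F 0 / 2 + (∑ i ∈ Finset.Ioo 0 M, F i) + F M / 2)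

lemma ipE_eq_Snode {M : ℕ} {h : ℝ} (l g : ℕ → ℝ) :
    ipE M h l g = Snode M h (fun i => l i * g i) := rfl

lemma Snode_congr {M : ℕ} {h : ℝ} {F G : ℕ → ℝ} (hFG : ∀ i ≤ M, F i = G i) :
    Snode M h F = Snode M h G := by
  rw [Snode, Snode, hFG 0 (Nat.zero_le _), hFG M le_rfl,
    Finset.sum_congr rfl (fun i hi => hFG i (le_of_lt (Finset.mem_Ioo.mp hi).2))]

lemma Snode_mono {M : ℕ} {h : ℝ} (hh : 0 ≤ h) {F G : ℕ → ℝ}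
    (hFG : ∀ i ≤ M, F i ≤ G i) : Snode M h F ≤ Snode M h G := by
  rw [Snode, Snode]
  apply mul_le_mul_of_nonneg_left _ hh
  have hs := Finset.sum_le_sum (s := Finset.Ioo 0 M) (f := F) (g := G) (fun i hi => hFG i (le_of_lt (Finset.mem_Ioo.mp hi).2))
  have h0 := hFG 0 (Nat.zero_le _)
  have hM := hFG M le_rfl
  linarith

lemma Snode_add {M : ℕ} {h : ℝ} (F G : ℕ → ℝ) :
    Snode M h (fun i => F i + G i) = Snode M h F + Snode M h G := by
  rw [Snode, Snode, Snode, Finset.sum_add_distrib]; ring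

lemma Snode_smul {M : ℕ} {h : ℝ} (a : ℝ) (F : ℕ → ℝ) :
    Snode M h (fun i => a * F i) = a * Snode M h F := by
  rw [Snode, Snode, ← Finset.mul_sum]; ring

lemma Snode_single_lb {M : ℕ} {h : ℝ} (hh : 0 ≤ h) {F : ℕ → ℝ}
    (hF : ∀ i ≤ M, 0 ≤ F i) {i0 : ℕ} (hi : i0 ∈ Finset.Ioo 0 M) :
    h * F i0 ≤ Snode M h F := by
  have hs : F i0 ≤ ∑ i ∈ Finset.Ioo 0 M, F i :=
    Finset.single_le_sum (fun i hi' => hF i (le_of_lt (Finset.mem_Ioo.mp hi').2)) hi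
  have h0 := hF 0 (Nat.zero_le _)
  have hM := hF M le_rfl
  rw [Snode]
  exact mul_le_mul_of_nonneg_left (by linarith) hh

lemma ipE_congr {M : ℕ} {h : ℝ} {l g l' g' : ℕ → ℝ}
    (hc : ∀ i ≤ M, l i * g i = l' i * g' i) :
    ipE M h l g = ipE M h l' g' := by
  rw [ipE, ipE, hc 0 (Nat.zero_le _), hc M le_rfl,
      Finset.sum_congr rfl (fun i hi => hc i (le_of_lt (Finset.mem_Ioo.mp hi).2))]

lemma Jfun_congr (M : ℕ) (h τ : ℝ) (H f Vc Ve Wc We : ℝ → ℝ)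
    (u0 u0half xn : ℕ → ℝ) {z z' : ℕ → ℝ} (hzz : ∀ i ≤ M, z i = z' i) :
    Jfun M h τ H f Vc Ve Wc We u0 u0half xn z
      = Jfun M h τ H f Vc Ve Wc We u0 u0half xn z' := by
  have hShat : ∀ (K : ℝ → ℝ) (i : ℕ), i ≤ M → Shat M h K u0 z i = Shat M h K u0 z' i := by
    intro K i hi
    rw [Shat, Shat]
    exact ipE_congr (fun j hj => by rw [hzz i hi, hzz j hj])
  have e1 : ipE M h (fun i => cCoef M h f u0 xn i * (z i - xn i)) (fun i => z i - xn i)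
      = ipE M h (fun i => cCoef M h f u0 xn i * (z' i - xn i)) (fun i => z' i - xn i) :=
    ipE_congr (fun i hi => by rw [hzz i hi])
  have e2 : ∑ i ∈ Finset.Icc 1 M, H (u0half i / DhOp h z i) * DhOp h z i
      = ∑ i ∈ Finset.Icc 1 M, H (u0half i / DhOp h z' i) * DhOp h z' i := by
    apply Finset.sum_congr rfl
    intro i hi
    obtain ⟨hi1, hi2⟩ := Finset.mem_Icc.mp hi
    rw [DhOp, DhOp, hzz i hi2, hzz (i-1) (by omega)]
  have e3 : ipE M h u0 (fun i => Vc (z i)) = ipE M h u0 (fun i => Vc (z' i)) :=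
    ipE_congr (fun i hi => by rw [hzz i hi])
  have e4 : ipE M h u0 (fun i => Shat M h Wc u0 z i)
      = ipE M h u0 (fun i => Shat M h Wc u0 z' i) :=
    ipE_congr (fun i hi => by rw [hShat Wc i hi])
  have e5 : ipE M h (fun i => u0 i * deriv Ve (xn i)) z
      = ipE M h (fun i => u0 i * deriv Ve (xn i)) z' :=
    ipE_congr (fun i hi => by rw [hzz i hi])
  have e6 : ipE M h (fun i => u0 i * Shat M h (deriv We) u0 xn i) z
      = ipE M h (fun i => u0 i * Shat M h (deriv We) u0 xn i) z' :=
    ipE_congr (fun i hi => by rw [hzz i hi])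
  rw [Jfun, Jfun, e1, e2, e3, e4, e5, e6]

lemma convexOn_mid {g : ℝ → ℝ} (hg : ConvexOn ℝ Set.univ g) (a b : ℝ) :
    g ((a + b) / 2) ≤ (g a + g b) / 2 := by
  have := hg.2 (Set.mem_univ a) (Set.mem_univ b)
    (by norm_num : (0:ℝ) ≤ 1/2) (by norm_num : (0:ℝ) ≤ 1/2) (by norm_num)
  simp only [smul_eq_mul] at this
  calc g ((a + b) / 2) = g (1/2 * a + 1/2 * b) := by ring_nf
    _ ≤ 1/2 * g a + 1/2 * g b := this
    _ = (g a + g b) / 2 := by ring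

lemma persp_form (H : ℝ → ℝ) {h u0h : ℝ} (hh : h ≠ 0) {z : ℕ → ℝ} {i : ℕ}
    (hd : z i - z (i-1) ≠ 0) :
    h * (H (u0h / DhOp h z i) * DhOp h z i)
      = H (u0h * h / (z i - z (i-1))) * (z i - z (i-1)) := by
  rw [DhOp, div_div_eq_mul_div]
  field_simp

lemma Jfun_midpoint (M : ℕ) (hM : 2 ≤ M) (X0 XM : ℝ)
    (h : ℝ) (hhpos : 0 < h) (τ : ℝ) (hτ : 0 < τ)
    (H f Vc Ve Wc We : ℝ → ℝ)
    (hHconv : ConvexOn ℝ (Set.Ioi 0) H)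
    (hVcconv : ConvexOn ℝ Set.univ Vc)
    (hWcconv : ConvexOn ℝ Set.univ Wc)
    (u0 u0half : ℕ → ℝ) (hu0 : ∀ i ≤ M, 0 < u0 i)
    (hu0half : ∀ i, 1 ≤ i → i ≤ M → 0 < u0half i)
    (xn : ℕ → ℝ) (hcnn : ∀ i ≤ M, 0 ≤ cCoef M h f u0 xn i)
    {x x' : ℕ → ℝ} (hx : inQ M X0 XM x) (hx' : inQ M X0 XM x')
    {i0 : ℕ} (hi0 : i0 ∈ Finset.Ioo 0 M) :
    Jfun M h τ H f Vc Ve Wc We u0 u0half xn (fun i => (x i + x' i) / 2)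
      ≤ (Jfun M h τ H f Vc Ve Wc We u0 u0half xn x
          + Jfun M h τ H f Vc Ve Wc We u0 u0half xn x') / 2
        - 1 / (2 * τ) * (h * (cCoef M h f u0 xn i0 * ((x i0 - x' i0) / 2) ^ 2)) := by
  set w : ℕ → ℝ := fun i => (x i + x' i) / 2 with hw
  -- quadratic part
  have hq1 : Snode M h (fun i => cCoef M h f u0 xn i * (w i - xn i) * (w i - xn i))
      = Snode M h (fun i => 1/2 * (cCoef M h f u0 xn i * (x i - xn i) * (x i - xn i))
          + (1/2 * (cCoef M h f u0 xn i * (x' i - xn i) * (x' i - xn i))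
            + (-1) * (cCoef M h f u0 xn i * ((x i - x' i) / 2) ^ 2))) :=
    Snode_congr (fun i _ => by simp only [hw]; ring)
  rw [Snode_add, Snode_add, Snode_smul, Snode_smul, Snode_smul] at hq1
  have hsingle : h * (cCoef M h f u0 xn i0 * ((x i0 - x' i0) / 2) ^ 2)
      ≤ Snode M h (fun i => cCoef M h f u0 xn i * ((x i - x' i) / 2) ^ 2) :=
    Snode_single_lb hhpos.le (F := fun i => cCoef M h f u0 xn i * ((x i - x' i) / 2) ^ 2)
      (fun i hi => mul_nonneg (hcnn i hi) (sq_nonneg _)) hi0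
  have hquad : 1 / (2 * τ) * Snode M h (fun i => cCoef M h f u0 xn i * (w i - xn i) * (w i - xn i))
      ≤ 1 / (2 * τ) * (1/2 * Snode M h (fun i => cCoef M h f u0 xn i * (x i - xn i) * (x i - xn i))
          + 1/2 * Snode M h (fun i => cCoef M h f u0 xn i * (x' i - xn i) * (x' i - xn i))
          - h * (cCoef M h f u0 xn i0 * ((x i0 - x' i0) / 2) ^ 2)) := by
    apply mul_le_mul_of_nonneg_left _ (by positivity)
    rw [hq1]; linarith
  -- H part
  have hHsum : h * ∑ i ∈ Finset.Icc 1 M, H (u0half i / DhOp h w i) * DhOp h w i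
      ≤ (h * ∑ i ∈ Finset.Icc 1 M, H (u0half i / DhOp h x i) * DhOp h x i
        + h * ∑ i ∈ Finset.Icc 1 M, H (u0half i / DhOp h x' i) * DhOp h x' i) / 2 := by
    rw [Finset.mul_sum, Finset.mul_sum, Finset.mul_sum, ← Finset.sum_add_distrib,
      Finset.sum_div]
    apply Finset.sum_le_sum
    intro i hi
    obtain ⟨hi1, hi2⟩ := Finset.mem_Icc.mp hi
    have hdx : 0 < x i - x (i-1) := by linarith [hx.2.2 i hi1 hi2]
    have hdx' : 0 < x' i - x' (i-1) := by linarith [hx'.2.2 i hi1 hi2]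
    have hdw : 0 < w i - w (i-1) := by simp only [hw]; linarith
    have hc : 0 < u0half i * h := mul_pos (hu0half i hi1 hi2) hhpos
    rw [persp_form H (ne_of_gt hhpos) (ne_of_gt hdw),
        persp_form H (ne_of_gt hhpos) (ne_of_gt hdx),
        persp_form H (ne_of_gt hhpos) (ne_of_gt hdx')]
    have harg : w i - w (i-1) = ((x i - x (i-1)) + (x' i - x' (i-1))) / 2 := by
      simp only [hw]; ring
    rw [harg]
    exact H_persp_mid hHconv hc hdx hdx'
  -- Vc part
  have hVc : Snode M h (fun i => u0 i * Vc (w i))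
      ≤ (Snode M h (fun i => u0 i * Vc (x i)) + Snode M h (fun i => u0 i * Vc (x' i))) / 2 := by
    have hmono : Snode M h (fun i => u0 i * Vc (w i))
        ≤ Snode M h (fun i => 1/2 * (u0 i * Vc (x i)) + 1/2 * (u0 i * Vc (x' i))) := by
      apply Snode_mono hhpos.le
      intro i hi
      have hm := convexOn_mid hVcconv (x i) (x' i)
      have hu := (hu0 i hi).le
      have : w i = (x i + x' i) / 2 := by simp only [hw]
      rw [this]
      nlinarith
    rw [Snode_add, Snode_smul, Snode_smul] at hmono
    linarith
  -- Wc part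
  have hShat : ∀ i ≤ M, Shat M h Wc u0 w i
      ≤ (Shat M h Wc u0 x i + Shat M h Wc u0 x' i) / 2 := by
    intro i hi
    rw [Shat, Shat, Shat, ipE_eq_Snode, ipE_eq_Snode, ipE_eq_Snode]
    have hmono : Snode M h (fun j => Wc (w i - w j) * u0 j)
        ≤ Snode M h (fun j => 1/2 * (Wc (x i - x j) * u0 j) + 1/2 * (Wc (x' i - x' j) * u0 j)) := by
      apply Snode_mono hhpos.le
      intro j hj
      have hm := convexOn_mid hWcconv (x i - x j) (x' i - x' j)
      have hu := (hu0 j hj).le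
      have harg : w i - w j = ((x i - x j) + (x' i - x' j)) / 2 := by simp only [hw]; ring
      rw [harg]
      nlinarith
    rw [Snode_add, Snode_smul, Snode_smul] at hmono
    linarith
  have hWc : Snode M h (fun i => u0 i * Shat M h Wc u0 w i)
      ≤ (Snode M h (fun i => u0 i * Shat M h Wc u0 x i)
        + Snode M h (fun i => u0 i * Shat M h Wc u0 x' i)) / 2 := by
    have hmono : Snode M h (fun i => u0 i * Shat M h Wc u0 w i)
        ≤ Snode M h (fun i => 1/2 * (u0 i * Shat M h Wc u0 x i)
            + 1/2 * (u0 i * Shat M h Wc u0 x' i)) := by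
      apply Snode_mono hhpos.le
      intro i hi
      have hm := hShat i hi
      have hu := (hu0 i hi).le
      nlinarith
    rw [Snode_add, Snode_smul, Snode_smul] at hmono
    linarith
  -- linear parts
  have hlin : ∀ a : ℕ → ℝ, Snode M h (fun i => a i * w i)
      = (Snode M h (fun i => a i * x i) + Snode M h (fun i => a i * x' i)) / 2 := by
    intro a
    have he : Snode M h (fun i => a i * w i)
        = Snode M h (fun i => 1/2 * (a i * x i) + 1/2 * (a i * x' i)) :=
      Snode_congr (fun i _ => by simp only [hw]; ring)
    rw [he, Snode_add, Snode_smul, Snode_smul]; ring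
  have hlin1 := hlin (fun i => u0 i * deriv Ve (xn i))
  have hlin2 := hlin (fun i => u0 i * Shat M h (deriv We) u0 xn i)
  simp only [Jfun, ipE_eq_Snode]
  linarith

lemma Jfun_continuousOn (M : ℕ) (h τ : ℝ) (hhpos : 0 < h)
    (H f Vc Ve Wc We : ℝ → ℝ)
    (hHreg : ContDiffOn ℝ 1 H (Set.Ioi 0))
    (hVc : Continuous Vc) (hWc : Continuous Wc)
    (u0 u0half : ℕ → ℝ) (hu0half : ∀ i, 1 ≤ i → i ≤ M → 0 < u0half i)
    (xn : ℕ → ℝ) :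
    ContinuousOn (fun z : ℕ → ℝ => Jfun M h τ H f Vc Ve Wc We u0 u0half xn z)
      {z : ℕ → ℝ | ∀ i, 1 ≤ i → i ≤ M → z (i-1) < z i} := by
  set U := {z : ℕ → ℝ | ∀ i, 1 ≤ i → i ≤ M → z (i-1) < z i} with hU
  have hHc : ContinuousOn H (Set.Ioi 0) := hHreg.continuousOn
  simp only [Jfun]
  apply ContinuousOn.sub
  apply ContinuousOn.sub
  apply ContinuousOn.add
  apply ContinuousOn.add
  apply ContinuousOn.add
  · exact Continuous.continuousOn (by simp only [ipE]; fun_prop)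
  · have hs : ∀ i ∈ Finset.Icc 1 M, ContinuousOn
        (fun z : ℕ → ℝ => H (u0half i / DhOp h z i) * DhOp h z i) U := by
      intro i hi
      obtain ⟨hi1, hi2⟩ := Finset.mem_Icc.mp hi
      have hD : Continuous (fun z : ℕ → ℝ => DhOp h z i) := by
        simp only [DhOp]
        exact (((continuous_apply (A := fun _ : ℕ => ℝ) i)).sub (continuous_apply (A := fun _ : ℕ => ℝ) (i-1))).div_const h
      have hDpos : ∀ z ∈ U, 0 < DhOp h z i := by
        intro z hz
        have hz' : ∀ j, 1 ≤ j → j ≤ M → z (j-1) < z j := hz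
        have := hz' i hi1 hi2
        rw [DhOp]
        exact div_pos (by linarith) hhpos
      have hinner : ContinuousOn (fun z : ℕ → ℝ => u0half i / DhOp h z i) U :=
        ContinuousOn.div continuousOn_const hD.continuousOn (fun z hz => ne_of_gt (hDpos z hz))
      have hcomp : ContinuousOn (fun z : ℕ → ℝ => H (u0half i / DhOp h z i)) U := by
        apply hHc.comp hinner
        intro z hz
        exact Set.mem_Ioi.mpr (div_pos (hu0half i hi1 hi2) (hDpos z hz))
      exact hcomp.mul hD.continuousOn
    exact continuousOn_const.mul (continuousOn_finset_sum _ hs)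
  · exact Continuous.continuousOn (by simp only [ipE]; fun_prop)
  · exact Continuous.continuousOn (by simp only [ipE, Shat]; fun_prop)
  · show ContinuousOn (fun z : ℕ → ℝ => ipE M h (fun i => u0 i * deriv Ve (xn i)) z) U
    exact Continuous.continuousOn (by simp only [ipE]; fun_prop)
  · show ContinuousOn
      (fun z : ℕ → ℝ => ipE M h (fun i => u0 i * Shat M h (deriv We) u0 xn i) z) U
    exact Continuous.continuousOn (by simp only [ipE]; fun_prop)


/-- If `H` is superlinear then (i) `J` blows up along sequences in `Q` converging to a
point of `Q̄ \ Q`, and (ii) `J` attains its infimum over `Q` at a unique point. -/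
theorem Jfun_coercive_and_unique_minimizer
    (M : ℕ) (hM : 2 ≤ M) (X0 XM : ℝ) (hX : X0 < XM)
    (h : ℝ) (hh : h = (XM - X0) / (M : ℝ)) (τ : ℝ) (hτ : 0 < τ)
    (H f Vc Ve Wc We : ℝ → ℝ)
    (hHconv : ConvexOn ℝ (Set.Ioi 0) H) (hHreg : ContDiffOn ℝ 1 H (Set.Ioi 0))
    (hf : ∀ s : ℝ, 0 < s → 0 < f s)
    (hVcconv : ConvexOn ℝ Set.univ Vc) (hVcreg : ContDiff ℝ 1 Vc)
    (hVeconv : ConvexOn ℝ Set.univ Ve) (hVereg : ContDiff ℝ 1 Ve)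
    (hWcconv : ConvexOn ℝ Set.univ Wc) (hWcreg : ContDiff ℝ 1 Wc)
    (hWeconv : ConvexOn ℝ Set.univ We) (hWereg : ContDiff ℝ 1 We)
    (hWceven : ∀ s : ℝ, Wc (-s) = Wc s) (hWeeven : ∀ s : ℝ, We (-s) = We s)
    (u0 u0half : ℕ → ℝ)
    (hu0 : ∀ i ≤ M, 0 < u0 i)
    (hu0half : ∀ i, 1 ≤ i → i ≤ M → 0 < u0half i)
    (hHsup : Tendsto (fun s => H s / s) atTop atTop)
    (xn : ℕ → ℝ) (hxn : inQ M X0 XM xn) :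
    (∀ z : ℕ → ℕ → ℝ, (∀ k, inQ M X0 XM (z k)) →
      ∀ y : ℕ → ℝ, inQbar M X0 XM y → ¬inQ M X0 XM y →
        (∀ i ≤ M, Tendsto (fun k => z k i) atTop (nhds (y i))) →
        Tendsto (fun k => Jfun M h τ H f Vc Ve Wc We u0 u0half xn (z k)) atTop atTop)
    ∧ ∃ x : ℕ → ℝ, inQ M X0 XM x
        ∧ (∀ z : ℕ → ℝ, inQ M X0 XM z →
            Jfun M h τ H f Vc Ve Wc We u0 u0half xn x
              ≤ Jfun M h τ H f Vc Ve Wc We u0 u0half xn z)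
        ∧ ∀ x' : ℕ → ℝ, inQ M X0 XM x' →
            (∀ z : ℕ → ℝ, inQ M X0 XM z →
              Jfun M h τ H f Vc Ve Wc We u0 u0half xn x'
                ≤ Jfun M h τ H f Vc Ve Wc We u0 u0half xn z) →
            ∀ i ≤ M, x' i = x i := by
  have hMpos : (0:ℝ) < (M:ℝ) := by exact_mod_cast (by omega : 0 < M)
  have hhpos : 0 < h := by rw [hh]; exact div_pos (by linarith) hMpos
  obtain ⟨C, hC⟩ := Jfun_lb M hM X0 XM hX h hh τ hτ H f Vc Ve Wc We hHconv hf hVcreg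
    hWcreg u0 u0half hu0 hu0half hHsup xn hxn
  constructor
  · -- part (i)
    intro z hz y hybar hynot hconv
    obtain ⟨i0, hi01, hi0M, heq⟩ : ∃ i0, 1 ≤ i0 ∧ i0 ≤ M ∧ y (i0-1) = y i0 := by
      by_contra hcon
      push_neg at hcon
      exact hynot ⟨hybar.1, hybar.2.1, fun i h1 h2 =>
        lt_of_le_of_ne (hybar.2.2 i h1 h2) (hcon i h1 h2)⟩
    have hgap0 : Tendsto (fun k => z k i0 - z k (i0-1)) atTop (nhds 0) := by
      have := (hconv i0 hi0M).sub (hconv (i0-1) (by omega))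
      rw [heq, sub_self] at this
      exact this
    have hgpos : ∀ k, 0 < z k i0 - z k (i0-1) := fun k => by
      linarith [(hz k).2.2 i0 hi01 hi0M]
    have hgW : Tendsto (fun k => z k i0 - z k (i0-1)) atTop
        (nhdsWithin 0 (Set.Ioi 0)) :=
      tendsto_nhdsWithin_of_tendsto_nhds_of_eventually_within _ hgap0
        (Eventually.of_forall fun k => Set.mem_Ioi.mpr (hgpos k))
    have hcpos : 0 < u0half i0 * h := mul_pos (hu0half i0 hi01 hi0M) hhpos
    have hblow := (persp_tendsto hHsup hcpos).comp hgW
    have hblow' : Tendsto (fun k =>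
        H (u0half i0 * h / (z k i0 - z k (i0-1))) * (z k i0 - z k (i0-1)) - C)
        atTop atTop := by
      have := tendsto_atTop_add_const_right atTop (-C) hblow
      refine this.congr (fun k => ?_)
      simp [Function.comp, sub_eq_add_neg]
    exact tendsto_atTop_mono (fun k => hC (z k) (hz k) i0 hi01 hi0M) hblow'
  · -- part (ii)
    have hcont := Jfun_continuousOn M h τ hhpos H f Vc Ve Wc We hHreg
      hVcreg.continuous hWcreg.continuous u0 u0half hu0half xn
    set p : ℕ → ℝ := fun i => if i ≤ M then xn i else XM with hp
    have hpQ : inQ M X0 XM p := by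
      refine ⟨?_, ?_, ?_⟩
      · simp only [hp, if_pos (Nat.zero_le M)]; exact hxn.1
      · simp only [hp, if_pos (le_refl M)]; exact hxn.2.1
      · intro i h1 h2
        simp only [hp, if_pos h2, if_pos (by omega : i - 1 ≤ M)]
        exact hxn.2.2 i h1 h2
    set A : ℝ := Jfun M h τ H f Vc Ve Wc We u0 u0half xn p + C with hA
    have hδ : ∀ i : ℕ, ∃ δ : ℝ, 0 < δ ∧ ∀ d : ℝ, 0 < d → d < δ →
        (1 ≤ i → i ≤ M → A < H (u0half i * h / d) * d) := by
      intro i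
      by_cases hi : 1 ≤ i ∧ i ≤ M
      · have hcpos : 0 < u0half i * h := mul_pos (hu0half i hi.1 hi.2) hhpos
        have hev := (persp_tendsto hHsup hcpos).eventually (eventually_gt_atTop A)
        obtain ⟨u, hu, hsub⟩ := mem_nhdsGT_iff_exists_Ioo_subset.mp hev
        exact ⟨u, hu, fun d hd1 hd2 _ _ => hsub ⟨hd1, hd2⟩⟩
      · exact ⟨1, one_pos, fun d _ _ h1 h2 => absurd ⟨h1, h2⟩ hi⟩
    choose δ hδpos hδlt using hδ
    have hne : (Finset.Icc 1 M).Nonempty := ⟨1, Finset.mem_Icc.mpr ⟨le_rfl, by omega⟩⟩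
    set ε : ℝ := min ((Finset.Icc 1 M).inf' hne (fun i => xn i - xn (i-1)))
      ((Finset.Icc 1 M).inf' hne δ) with hε
    have hεpos : 0 < ε := by
      rw [hε]
      apply lt_min
      · rw [Finset.lt_inf'_iff]
        intro i hi
        obtain ⟨h1, h2⟩ := Finset.mem_Icc.mp hi
        linarith [hxn.2.2 i h1 h2]
      · rw [Finset.lt_inf'_iff]
        intro i _
        exact hδpos i
    have hεδ : ∀ i, 1 ≤ i → i ≤ M → ε ≤ δ i := fun i h1 h2 =>
      le_trans (min_le_right _ _) (Finset.inf'_le _ (Finset.mem_Icc.mpr ⟨h1, h2⟩))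
    have hεg : ∀ i, 1 ≤ i → i ≤ M → ε ≤ xn i - xn (i-1) := fun i h1 h2 =>
      le_trans (min_le_left _ _) (Finset.inf'_le _ (Finset.mem_Icc.mpr ⟨h1, h2⟩))
    set K : Set (ℕ → ℝ) := {v | v 0 = X0} ∩
      ({v | ∀ i, 1 ≤ i → i ≤ M → v (i-1) + ε ≤ v i} ∩ {v | ∀ i, M ≤ i → v i = XM})
      with hK
    have hKQ : ∀ v ∈ K, inQ M X0 XM v := by
      intro v hv
      obtain ⟨h0, hgaps, htail⟩ := hv
      exact ⟨h0, htail M le_rfl, fun i h1 h2 => by linarith [hgaps i h1 h2, hεpos]⟩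
    have hKsub : K ⊆ Set.pi Set.univ (fun _ : ℕ => Set.Icc X0 XM) := by
      intro v hv i _
      rcases le_or_gt i M with hi | hi
      · exact ⟨(inQ_bounds (hKQ v hv) i hi).1, (inQ_bounds (hKQ v hv) i hi).2⟩
      · rw [hv.2.2 i hi.le]
        exact ⟨hX.le, le_rfl⟩
    have hKclosed : IsClosed K := by
      rw [hK]
      refine IsClosed.inter ?_ (IsClosed.inter ?_ ?_)
      · exact isClosed_eq (continuous_apply 0) continuous_const
      · have he : {v : ℕ → ℝ | ∀ i, 1 ≤ i → i ≤ M → v (i-1) + ε ≤ v i}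
            = ⋂ i ∈ {i : ℕ | 1 ≤ i ∧ i ≤ M}, {v : ℕ → ℝ | v (i-1) + ε ≤ v i} := by
          ext v
          simp only [Set.mem_setOf_eq, Set.mem_iInter]
          constructor
          · intro hv i hi; exact hv i hi.1 hi.2
          · intro hv i h1 h2; exact hv i ⟨h1, h2⟩
        rw [he]
        refine isClosed_biInter (fun i _ => ?_)
        exact isClosed_le (((continuous_apply (A := fun _ : ℕ => ℝ) (i-1))).add
          continuous_const) (continuous_apply i)
      · have he : {v : ℕ → ℝ | ∀ i, M ≤ i → v i = XM}
            = ⋂ i ∈ {i : ℕ | M ≤ i}, {v : ℕ → ℝ | v i = XM} := by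
          ext v
          simp only [Set.mem_setOf_eq, Set.mem_iInter]
        rw [he]
        refine isClosed_biInter (fun i _ => ?_)
        exact isClosed_eq (continuous_apply i) continuous_const
    have hKcpt : IsCompact K := IsCompact.of_isClosed_subset
      (isCompact_univ_pi (fun _ => isCompact_Icc)) hKclosed hKsub
    have hpK : p ∈ K := by
      refine ⟨hpQ.1, ?_, ?_⟩
      · intro i h1 h2
        simp only [hp, if_pos h2, if_pos (by omega : i - 1 ≤ M)]
        linarith [hεg i h1 h2]
      · intro i hi
        rcases eq_or_lt_of_le hi with hMi | hMi
        · simp only [hp, ← hMi, if_pos (le_refl M)]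
          exact hxn.2.1
        · simp only [hp, if_neg (by omega : ¬ i ≤ M)]
    have hKne : K.Nonempty := ⟨p, hpK⟩
    have hKU : K ⊆ {z : ℕ → ℝ | ∀ i, 1 ≤ i → i ≤ M → z (i-1) < z i} :=
      fun v hv i h1 h2 => by linarith [hv.2.1 i h1 h2, hεpos]
    obtain ⟨x, hxK, hxmin⟩ := hKcpt.exists_isMinOn hKne (hcont.mono hKU)
    have hxQ := hKQ x hxK
    have hmin : ∀ z, inQ M X0 XM z →
        Jfun M h τ H f Vc Ve Wc We u0 u0half xn x
          ≤ Jfun M h τ H f Vc Ve Wc We u0 u0half xn z := by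
      intro z hzQ
      by_cases hcase : ∀ i, 1 ≤ i → i ≤ M → ε ≤ z i - z (i-1)
      · set z' : ℕ → ℝ := fun i => if i ≤ M then z i else XM with hz'
        have hzz' : ∀ i ≤ M, z i = z' i := fun i hi => by
          simp only [hz', if_pos hi]
        have hz'K : z' ∈ K := by
          refine ⟨?_, ?_, ?_⟩
          · show z' 0 = X0
            simp only [hz', if_pos (Nat.zero_le M)]; exact hzQ.1
          · intro i h1 h2
            simp only [hz', if_pos h2, if_pos (by omega : i - 1 ≤ M)]
            linarith [hcase i h1 h2]
          · intro i hi
            rcases eq_or_lt_of_le hi with hMi | hMi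
            · simp only [hz', ← hMi, if_pos (le_refl M)]
              exact hzQ.2.1
            · simp only [hz', if_neg (by omega : ¬ i ≤ M)]
        rw [Jfun_congr M h τ H f Vc Ve Wc We u0 u0half xn hzz']
        exact isMinOn_iff.mp hxmin z' hz'K
      · push_neg at hcase
        obtain ⟨i, h1, h2, hlt⟩ := hcase
        have hgpos : 0 < z i - z (i-1) := by linarith [hzQ.2.2 i h1 h2]
        have hblow := hδlt i _ hgpos (lt_of_lt_of_le hlt (hεδ i h1 h2)) h1 h2
        have hlb := hC z hzQ i h1 h2
        have hpmin := isMinOn_iff.mp hxmin p hpK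
        rw [hA] at hblow
        linarith
    refine ⟨x, hxQ, hmin, ?_⟩
    intro x' hx'Q hx'min i hi
    by_contra hne'
    have hJeq : Jfun M h τ H f Vc Ve Wc We u0 u0half xn x'
        = Jfun M h τ H f Vc Ve Wc We u0 u0half xn x :=
      le_antisymm (hx'min x hxQ) (hmin x' hx'Q)
    have hi0 : i ∈ Finset.Ioo 0 M := by
      rw [Finset.mem_Ioo]
      constructor
      · rcases Nat.eq_zero_or_pos i with h0 | h0
        · exfalso; apply hne'; rw [h0, hx'Q.1, hxQ.1]
        · exact h0
      · rcases eq_or_lt_of_le hi with hMi | hMi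
        · exfalso; apply hne'; rw [hMi, hx'Q.2.1, hxQ.2.1]
        · exact hMi
    have hwQ : inQ M X0 XM (fun j => (x j + x' j) / 2) := by
      refine ⟨?_, ?_, ?_⟩
      · show (x 0 + x' 0) / 2 = X0
        rw [hxQ.1, hx'Q.1]; ring
      · show (x M + x' M) / 2 = XM
        rw [hxQ.2.1, hx'Q.2.1]; ring
      · intro j h1 h2
        show (x (j-1) + x' (j-1)) / 2 < (x j + x' j) / 2
        linarith [hxQ.2.2 j h1 h2, hx'Q.2.2 j h1 h2]
    have hcnn : ∀ j ≤ M, 0 ≤ cCoef M h f u0 xn j :=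
      fun j hj => (cCoef_pos hhpos hf hu0 hM hxn j hj).le
    have hmid := Jfun_midpoint M hM X0 XM h hhpos τ hτ H f Vc Ve Wc We hHconv
      hVcconv hWcconv u0 u0half hu0 hu0half xn hcnn hxQ hx'Q hi0
    have hcpos : 0 < cCoef M h f u0 xn i := cCoef_pos hhpos hf hu0 hM hxn i hi
    have hsq : 0 < ((x i - x' i) / 2) ^ 2 := by
      have hnz : x i - x' i ≠ 0 := sub_ne_zero.mpr (fun hxx => hne' hxx.symm)
      exact pow_two_pos_of_ne_zero (div_ne_zero hnz two_ne_zero)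
    have hwmin := hmin _ hwQ
    have hprod : 0 < 1 / (2 * τ) * (h * (cCoef M h f u0 xn i * ((x i - x' i) / 2) ^ 2)) := by
      positivity
    linarith
end
end
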